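/- Let r be an odd prime and F a finite extension of ℚ_r not containing a primitive r-th root of unity, with normalized valuation v_F. Let u ∈ O_F be not an r-th power in O_F with v_F(u) ≢ 0 (mod r), and M = F(u^(1/r)). Then v_F(disc(M/F)) = r·e(F/ℚ_r) + r − 1. -/

import Mathlib

section ValLemmas

variable {K : Type*} [Field K] (v : K → ℤ)
    (hv_mul : ∀ x y : K, x ≠ 0 → y ≠ 0 → v (x * y) = v x + v y)

include hv_mul

theorem val_one' : v 1 = 0 := by
  have := hv_mul 1 1 one_ne_zero one_ne_zero
  simp at this; omega

theorem val_neg' (x : K) (hx : x ≠ 0) : v (-x) = v x := by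
  have h1 : v ((-1 : K) * (-1 : K)) = v (-1) + v (-1) := hv_mul _ _ (by norm_num) (by norm_num)
  have h2 : v ((-1 : K) * x) = v (-1) + v x := hv_mul _ _ (by norm_num) hx
  rw [neg_mul_neg, one_mul] at h1
  rw [neg_one_mul] at h2
  have h0 := val_one' v hv_mul
  rw [h2]; omega

theorem val_pow' (x : K) (hx : x ≠ 0) (n : ℕ) : v (x ^ n) = n * v x := by
  induction n with
  | zero => simpa using val_one' v hv_mul
  | succ k ih =>
      rw [pow_succ, hv_mul _ _ (pow_ne_zero _ hx) hx, ih]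
      push_cast; ring

theorem val_inv' (x : K) (hx : x ≠ 0) : v x⁻¹ = - v x := by
  have := hv_mul x x⁻¹ hx (inv_ne_zero hx)
  rw [mul_inv_cancel₀ hx, val_one' v hv_mul] at this
  omega

theorem val_zpow' (x : K) (hx : x ≠ 0) (k : ℤ) : v (x ^ k) = k * v x := by
  obtain ⟨n, rfl | rfl⟩ := k.eq_nat_or_neg
  · rw [zpow_natCast, val_pow' v hv_mul x hx]
  · rw [zpow_neg, zpow_natCast, val_inv' v hv_mul _ (pow_ne_zero _ hx),
      val_pow' v hv_mul x hx]
    ring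

variable (hv_add : ∀ x y : K, x ≠ 0 → y ≠ 0 → x + y ≠ 0 → min (v x) (v y) ≤ v (x + y))

include hv_add

theorem val_add_ne' (x y : K) (hx : x ≠ 0) (hy : y ≠ 0) (hne : v x ≠ v y) :
    x + y ≠ 0 ∧ v (x + y) = min (v x) (v y) := by
  have hxy : x + y ≠ 0 := by
    intro h
    have : x = -y := by linear_combination h
    rw [this, val_neg' v hv_mul y hy] at hne
    exact hne rfl
  refine ⟨hxy, le_antisymm ?_ (hv_add x y hx hy hxy)⟩
  rcases lt_or_gt_of_ne hne with h | h
  · have h2 : min (v (x + y)) (v (-y)) ≤ v ((x + y) + (-y)) := by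
      refine hv_add _ _ hxy (neg_ne_zero.2 hy) ?_
      simpa using hx
    rw [add_neg_cancel_right, val_neg' v hv_mul y hy] at h2
    simp only [min_le_iff] at h2
    omega
  · have h2 : min (v (x + y)) (v (-x)) ≤ v ((x + y) + (-x)) := by
      refine hv_add _ _ hxy (neg_ne_zero.2 hx) ?_
      intro hc; apply hy; linear_combination hc
    have hyy : (x + y) + (-x) = y := by ring
    rw [hyy, val_neg' v hv_mul x hx] at h2
    simp only [min_le_iff] at h2
    omega

theorem val_sum' {ι : Type*} (s : Finset ι) (f : ι → K)
    (hs : s.Nonempty) (hf : ∀ i ∈ s, f i ≠ 0)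
    (hdist : ∀ i ∈ s, ∀ j ∈ s, i ≠ j → v (f i) ≠ v (f j)) :
    (∑ i ∈ s, f i) ≠ 0 ∧ ∃ i ∈ s, v (∑ i ∈ s, f i) = v (f i) ∧ ∀ j ∈ s, v (f i) ≤ v (f j) := by
  classical
  induction s using Finset.cons_induction with
  | empty => exact absurd hs (by simp)
  | cons a t ha ih =>
      rcases t.eq_empty_or_nonempty with rfl | ht
      · refine ⟨by simpa using hf a (by simp), a, by simp, by simp, ?_⟩
        intro j hj
        simp only [Finset.cons_eq_insert, Finset.mem_insert, Finset.notMem_empty, or_false] at hj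
        subst hj; exact le_refl _
      · have hfa : f a ≠ 0 := hf a (Finset.mem_cons_self a t)
        obtain ⟨hts, i, hi, hvi, hmin⟩ := ih ht
          (fun i hi => hf i (Finset.mem_cons_of_mem hi))
          (fun i hi j hj hij => hdist i (Finset.mem_cons_of_mem hi) j
            (Finset.mem_cons_of_mem hj) hij)
        have hne : v (f a) ≠ v (∑ i ∈ t, f i) := by
          rw [hvi]
          exact hdist a (Finset.mem_cons_self a t) i (Finset.mem_cons_of_mem hi)
            (fun h => ha (h ▸ hi))
        obtain ⟨hsum, hval⟩ := val_add_ne' v hv_mul hv_add _ _ hfa hts hne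
        rw [Finset.sum_cons]
        refine ⟨hsum, ?_⟩
        rcases le_or_gt (v (f a)) (v (∑ i ∈ t, f i)) with h | h
        · refine ⟨a, Finset.mem_cons_self a t, by omega, ?_⟩
          intro j hj
          rcases Finset.mem_cons.1 hj with rfl | hj
          · exact le_refl _
          · exact le_trans (by omega) (hmin j hj)
        · refine ⟨i, Finset.mem_cons_of_mem hi, by omega, ?_⟩
          intro j hj
          rcases Finset.mem_cons.1 hj with rfl | hj
          · omega
          · exact hmin j hj

end ValLemmas

theorem stmt13 (r : ℕ) [Fact (Nat.Prime r)] (hodd : Odd r)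
    (F : Type*) [Field F] [Algebra ℚ_[r] F] [FiniteDimensional ℚ_[r] F]
    (hnoroot : ¬ ∃ ζ : F, IsPrimitiveRoot ζ r)
    -- `v` is a normalized (surjective onto `ℤ`) valuation on `F`
    (v : F → ℤ)
    (hv_mul : ∀ x y : F, x ≠ 0 → y ≠ 0 → v (x * y) = v x + v y)
    (hv_add : ∀ x y : F, x ≠ 0 → y ≠ 0 → x + y ≠ 0 → min (v x) (v y) ≤ v (x + y))
    (hv_surj : ∀ n : ℤ, ∃ x : F, x ≠ 0 ∧ v x = n)
    -- the ramification index of `F/ℚ_r` is the valuation of `r`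
    (e : ℤ) (he : v ((r : ℕ) : F) = e)
    -- `u` is integral, not an `r`-th power in `O_F`, and `v(u) ≢ 0 (mod r)`
    (u : F) (hu0 : u ≠ 0) (huint : 0 ≤ v u)
    (hupow : ¬ ∃ z : F, (z = 0 ∨ 0 ≤ v z) ∧ z ^ r = u)
    (hur : ¬ (r : ℤ) ∣ v u)
    -- `M = F(u^{1/r})`
    (M : Type*) [Field M] [Algebra F M]
    (t : M) (ht : t ^ r = algebraMap F M u) (hgen : Algebra.adjoin F {t} = ⊤)
    -- `w` is a normalized valuation on `M` extending `v`
    (w : M → ℤ)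
    (hw_mul : ∀ x y : M, x ≠ 0 → y ≠ 0 → w (x * y) = w x + w y)
    (hw_add : ∀ x y : M, x ≠ 0 → y ≠ 0 → x + y ≠ 0 → min (w x) (w y) ≤ w (x + y))
    (hw_surj : ∀ n : ℤ, ∃ x : M, x ≠ 0 ∧ w x = n)
    (hw_ext : ∃ m : ℤ, 0 < m ∧ ∀ y : F, y ≠ 0 → w (algebraMap F M y) = m * v y)
    -- `b` is an `O_F`-basis of `O_M`
    (b : Fin r → M)
    (hb_int : ∀ i, b i = 0 ∨ 0 ≤ w (b i))
    (hb_li : LinearIndependent F b)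
    (hb_span : ∀ x : M, (x = 0 ∨ 0 ≤ w x) ↔
        ∃ c : Fin r → F, (∀ i, c i = 0 ∨ 0 ≤ v (c i)) ∧ x = ∑ i, c i • b i) :
    v (Algebra.discr F b) = r * e + r - 1 := by
  classical
  have hr : Nat.Prime r := Fact.out
  have hr2 : 2 ≤ r := hr.two_le
  have hrprime : Prime ((r : ℤ)) := Int.prime_iff_natAbs_prime.2 (by simpa using hr)
  haveI : CharZero F := charZero_of_injective_algebraMap (algebraMap ℚ_[r] F).injective
  haveI : CharZero M := charZero_of_injective_algebraMap (algebraMap F M).injective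
  obtain ⟨m, hm0, hm⟩ := hw_ext
  have hu0M : algebraMap F M u ≠ 0 := (map_ne_zero _).2 hu0
  have ht0 : t ≠ 0 := by
    intro h; rw [h, zero_pow hr.ne_zero] at ht; exact hu0M ht.symm
  have hwt : (r : ℤ) * w t = m * v u := by
    have h1 := val_pow' w hw_mul t ht0 r
    rw [ht, hm u hu0] at h1
    omega
  -- Fin coercion helper
  have hfin : ∀ i j : Fin r, i ≠ j → (r : ℤ) ∣ ((i : ℤ) - (j : ℤ)) → False := by
    intro i j hij hdvd
    have hi := i.isLt; have hj := j.isLt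
    have hd0 : ((i : ℤ) - (j : ℤ)) ≠ 0 := by
      intro h
      exact hij (Fin.ext (by omega))
    refine hd0 (Int.eq_zero_of_abs_lt_dvd hdvd ?_)
    rw [abs_sub_lt_iff]
    constructor <;> omega
  -- the key representation lemma
  have hkey : ∀ (z : M), z ≠ 0 →
      (∀ (i j : Fin r), i ≠ j → ∀ a b : F, a ≠ 0 → b ≠ 0 →
        m * v a + (i : ℤ) * w z ≠ m * v b + (j : ℤ) * w z) →
      ∀ c : Fin r → F, (∃ i, c i ≠ 0) →
        (∑ i, c i • z ^ (i : ℕ)) ≠ 0 ∧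
        ∃ i, c i ≠ 0 ∧ w (∑ i, c i • z ^ (i : ℕ)) = m * v (c i) + (i : ℤ) * w z ∧
          ∀ j, c j ≠ 0 → m * v (c i) + (i : ℤ) * w z ≤ m * v (c j) + (j : ℤ) * w z := by
    intro z hz hd c hex
    obtain ⟨i₀, hi₀⟩ := hex
    have hterm : ∀ i : Fin r, c i ≠ 0 →
        (c i • z ^ (i : ℕ)) ≠ 0 ∧ w (c i • z ^ (i : ℕ)) = m * v (c i) + (i : ℤ) * w z := by
      intro i hi
      have h1 : algebraMap F M (c i) ≠ 0 := (map_ne_zero _).2 hi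
      have h2 : z ^ (i : ℕ) ≠ 0 := pow_ne_zero _ hz
      constructor
      · rw [Algebra.smul_def]; exact mul_ne_zero h1 h2
      · rw [Algebra.smul_def, hw_mul _ _ h1 h2, hm _ hi, val_pow' w hw_mul z hz]
    set S := Finset.univ.filter (fun i : Fin r => c i ≠ 0) with hS
    have hmemS : ∀ i : Fin r, i ∈ S ↔ c i ≠ 0 := by intro i; simp [hS]
    have hSne : S.Nonempty := ⟨i₀, (hmemS i₀).2 hi₀⟩
    have hsum_eq : (∑ i, c i • z ^ (i : ℕ)) = ∑ i ∈ S, c i • z ^ (i : ℕ) := by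
      rw [hS]
      refine (Finset.sum_filter_of_ne ?_).symm
      intro x _ hx
      intro hcx; apply hx; rw [hcx, zero_smul]
    obtain ⟨hne, i, hiS, hvi, hmin⟩ := val_sum' w hw_mul hw_add S _ hSne
      (fun i hi => (hterm i ((hmemS i).1 hi)).1)
      (fun i hiM j hjM hij => by
        rw [(hterm i ((hmemS i).1 hiM)).2, (hterm j ((hmemS j).1 hjM)).2]
        exact hd i j hij _ _ ((hmemS i).1 hiM) ((hmemS j).1 hjM))
    refine ⟨by rw [hsum_eq]; exact hne, i, (hmemS i).1 hiS, ?_, ?_⟩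
    · rw [hsum_eq, hvi, (hterm i ((hmemS i).1 hiS)).2]
    · intro j hj
      have := hmin j ((hmemS j).2 hj)
      rwa [(hterm i ((hmemS i).1 hiS)).2, (hterm j hj).2] at this
  -- spanning by powers of t
  have hspan_t : ∀ x : M, ∃ c : Fin r → F, x = ∑ i, c i • t ^ (i : ℕ) := by
    intro x
    have hx : x ∈ Algebra.adjoin F {t} := hgen ▸ Algebra.mem_top
    rw [Algebra.adjoin_singleton_eq_range_aeval] at hx
    obtain ⟨p, hp⟩ := hx
    set P0 : Polynomial F := Polynomial.X ^ r - Polynomial.C u with hP0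
    have hP0m : P0.Monic := Polynomial.monic_X_pow_sub_C u hr.ne_zero
    have haev : Polynomial.aeval t P0 = 0 := by
      rw [hP0, map_sub, map_pow, Polynomial.aeval_X, Polynomial.aeval_C, ht, sub_self]
    have hxq : x = Polynomial.aeval t (p %ₘ P0) := by
      have h := Polynomial.modByMonic_add_div p P0
      rw [← hp]
      conv_lhs => rw [← h]
      simp only [map_add, map_mul, AlgHom.toRingHom_eq_coe, AlgHom.coe_toRingHom,
        haev, zero_mul, add_zero]
    have hdeg : (p %ₘ P0).natDegree < r := by
      rcases eq_or_ne (p %ₘ P0) 0 with h | h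
      · rw [h, Polynomial.natDegree_zero]; omega
      · have h1 := Polynomial.degree_modByMonic_lt p hP0m
        have h2 : P0.degree = (r : ℕ) := by
          rw [hP0]; exact Polynomial.degree_X_pow_sub_C (by omega) u
        rw [h2] at h1
        exact (Polynomial.natDegree_lt_iff_degree_lt h).2 h1
    refine ⟨fun i => (p %ₘ P0).coeff i, ?_⟩
    rw [hxq, Polynomial.aeval_eq_sum_range' hdeg, ← Fin.sum_univ_eq_sum_range]
  -- distinctness for t
  have hd_t : ∀ (i j : Fin r), i ≠ j → ∀ a b : F, a ≠ 0 → b ≠ 0 →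
      m * v a + (i : ℤ) * w t ≠ m * v b + (j : ℤ) * w t := by
    intro i j hij a b ha hb heq
    have h1 : m * ((r : ℤ) * v a + (i : ℤ) * v u) = m * ((r : ℤ) * v b + (j : ℤ) * v u) := by
      linear_combination (r : ℤ) * heq + ((j : ℤ) - (i : ℤ)) * hwt
    have h2 : (r : ℤ) * v a + (i : ℤ) * v u = (r : ℤ) * v b + (j : ℤ) * v u :=
      mul_left_cancel₀ (by omega) h1
    have h3 : (r : ℤ) ∣ ((i : ℤ) - (j : ℤ)) * v u := ⟨v b - v a, by linarith⟩
    rcases hrprime.dvd_or_dvd h3 with h | h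
    · exact hfin i j hij h
    · exact hur h
  -- m = r
  have hm_r : m = r := by
    have hdvd1 : (r : ℤ) ∣ m := by
      have h3 : (r : ℤ) ∣ m * v u := ⟨w t, by omega⟩
      rcases hrprime.dvd_or_dvd h3 with h | h
      · exact h
      · exact absurd h hur
    have hdvd2 : m ∣ (r : ℤ) := by
      obtain ⟨x, hx0, hx1⟩ := hw_surj 1
      obtain ⟨c, hc⟩ := hspan_t x
      have hcex : ∃ i, c i ≠ 0 := by
        by_contra h
        push_neg at h
        apply hx0
        rw [hc]
        exact Finset.sum_eq_zero (fun i _ => by rw [h i, zero_smul])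
      obtain ⟨hne, i, hci, hwx, -⟩ := hkey t ht0 hd_t c hcex
      rw [← hc, hx1] at hwx
      refine ⟨(r : ℤ) * v (c i) + (i : ℤ) * v u, ?_⟩
      linear_combination (r : ℤ) * hwx + (i : ℤ) * hwt
    exact Int.dvd_antisymm (by omega) (by positivity) hdvd2 hdvd1
  subst hm_r
  have hwt' : w t = v u := mul_left_cancel₀ (by positivity : (r : ℤ) ≠ 0) (by omega)
  -- Bezout
  have hcop : IsCoprime ((r : ℤ)) (v u) := (Prime.coprime_iff_not_dvd hrprime).2 hur
  obtain ⟨bz, az, hbez⟩ := hcop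
  obtain ⟨p, hp0, hp1⟩ := hv_surj 1
  have hpM0 : algebraMap F M p ≠ 0 := (map_ne_zero _).2 hp0
  set π : M := t ^ az * (algebraMap F M p) ^ bz with hπ
  set c0 : F := u ^ az * p ^ (bz * (r : ℤ)) with hc0
  have hπ0 : π ≠ 0 := mul_ne_zero (zpow_ne_zero _ ht0) (zpow_ne_zero _ hpM0)
  have hc00 : c0 ≠ 0 := mul_ne_zero (zpow_ne_zero _ hu0) (zpow_ne_zero _ hp0)
  have hwπ : w π = 1 := by
    rw [hπ, hw_mul _ _ (zpow_ne_zero _ ht0) (zpow_ne_zero _ hpM0),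
      val_zpow' w hw_mul t ht0, val_zpow' w hw_mul _ hpM0, hwt', hm p hp0, hp1]
    linarith [hbez]
  have hvc0 : v c0 = 1 := by
    rw [hc0, hv_mul _ _ (zpow_ne_zero _ hu0) (zpow_ne_zero _ hp0),
      val_zpow' v hv_mul u hu0, val_zpow' v hv_mul p hp0, hp1]
    linarith [hbez]
  have hπr : π ^ r = algebraMap F M c0 := by
    rw [hπ, hc0, map_mul, map_zpow₀, map_zpow₀]
    rw [mul_pow, ← zpow_natCast (t ^ az), ← zpow_natCast ((algebraMap F M p) ^ bz),
      ← zpow_mul, ← zpow_mul, mul_comm az (r : ℤ), zpow_mul, zpow_natCast, ht]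
  
  -- distinctness for π
  have hd_π : ∀ (i j : Fin r), i ≠ j → ∀ a b : F, a ≠ 0 → b ≠ 0 →
      (r : ℤ) * v a + (i : ℤ) * w π ≠ (r : ℤ) * v b + (j : ℤ) * w π := by
    intro i j hij a b ha hb heq
    rw [hwπ, mul_one, mul_one] at heq
    exact hfin i j hij ⟨v b - v a, by linarith⟩
  have hkeyπ := hkey π hπ0 hd_π
  -- linear independence of powers of π
  have hli : LinearIndependent F (fun i : Fin r => π ^ (i : ℕ)) := by
    rw [Fintype.linearIndependent_iff]
    intro g hg i
    by_contra hgi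
    exact (hkeyπ g ⟨i, hgi⟩).1 hg
  -- b spans M
  have hspan_b : ⊤ ≤ Submodule.span F (Set.range b) := by
    intro x _
    rcases eq_or_ne x 0 with rfl | hx
    · exact Submodule.zero_mem _
    · set k : ℕ := (- w x).toNat with hk
      have hknn : -(w x) ≤ (k : ℤ) := Int.self_le_toNat _
      have hpk : (algebraMap F M p) ^ k ≠ 0 := pow_ne_zero _ hpM0
      have hwk : 0 ≤ w ((algebraMap F M p) ^ k * x) := by
        rw [hw_mul _ _ hpk hx, val_pow' w hw_mul _ hpM0, hm p hp0, hp1]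
        have h1r : (1 : ℤ) ≤ (r : ℤ) := by exact_mod_cast hr.one_lt.le
        have hk0 : (0 : ℤ) ≤ (k : ℤ) := Int.ofNat_nonneg k
        nlinarith
      obtain ⟨c, hcint, hcx⟩ := (hb_span _).1 (Or.inr hwk)
      have hxx : x = (p ^ k)⁻¹ • ∑ i, c i • b i := by
        rw [← hcx, Algebra.smul_def, map_inv₀, map_pow]
        field_simp
      rw [hxx]
      exact Submodule.smul_mem _ _ (Submodule.sum_mem _ (fun i _ =>
        Submodule.smul_mem _ _ (Submodule.subset_span ⟨i, rfl⟩)))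
  -- bases
  let bB : Module.Basis (Fin r) F M := Module.Basis.mk hb_li hspan_b
  have hbB : ⇑bB = b := Module.Basis.coe_mk hb_li hspan_b
  haveI : FiniteDimensional F M := Module.Finite.of_basis bB
  have hrank : Module.finrank F M = r := by
    rw [Module.finrank_eq_card_basis bB, Fintype.card_fin]
  have hcard : Fintype.card (Fin r) = Module.finrank F M := by
    rw [hrank, Fintype.card_fin]
  let πB : Module.Basis (Fin r) F M := basisOfLinearIndependentOfCardEqFinrank hli hcard
  have hπB : ⇑πB = fun i : Fin r => π ^ (i : ℕ) :=
    coe_basisOfLinearIndependentOfCardEqFinrank _ _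
  let pb : PowerBasis F M := ⟨π, r, πB, fun i => by rw [hπB]⟩
  -- minimal polynomial of π
  set P : Polynomial F := Polynomial.X ^ r - Polynomial.C c0 with hP
  have hPm : P.Monic := Polynomial.monic_X_pow_sub_C c0 hr.ne_zero
  have haevπ : Polynomial.aeval π P = 0 := by
    rw [hP, map_sub, map_pow, Polynomial.aeval_X, Polynomial.aeval_C, hπr, sub_self]
  have hintπ : IsIntegral F π := pb.isIntegral_gen
  have hmp : minpoly F π = P := by
    have hdvd : minpoly F π ∣ P := minpoly.dvd F π haevπ
    have hdeg1 : (minpoly F π).natDegree = r := pb.natDegree_minpoly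
    have hPdeg : P.natDegree = r := by rw [hP]; exact Polynomial.natDegree_X_pow_sub_C
    obtain ⟨q, hq⟩ := hdvd
    have hmne : minpoly F π ≠ 0 := minpoly.ne_zero hintπ
    have hq0 : q ≠ 0 := by rintro rfl; rw [mul_zero] at hq; exact hPm.ne_zero hq
    have hqm : q.Monic := (minpoly.monic hintπ).of_mul_monic_left (hq ▸ hPm)
    have hdq : q.natDegree = 0 := by
      have hh := Polynomial.natDegree_mul hmne hq0
      rw [← hq, hPdeg, hdeg1] at hh
      omega
    have hq1 : q = 1 := hqm.natDegree_eq_zero.1 hdq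
    rw [hq, hq1, mul_one]
  -- separability
  haveI : Algebra.IsIntegral F M := Algebra.IsIntegral.of_finite F M
  haveI : Algebra.IsSeparable F M := inferInstance
  -- discriminant of the power basis via the norm
  have hdisc1 := Algebra.discr_powerBasis_eq_norm (K := F) (L := M) (pb := pb)
  have hder : Polynomial.aeval π (Polynomial.derivative (minpoly F π)) =
      algebraMap F M ((r : ℕ) : F) * π ^ (r - 1) := by
    rw [hmp, hP, Polynomial.derivative_sub, Polynomial.derivative_C, sub_zero,
      Polynomial.derivative_X_pow, map_mul, Polynomial.aeval_C, map_pow, Polynomial.aeval_X]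
  have hnormπ : Algebra.norm F π = c0 := by
    have h1 : Algebra.norm F pb.gen = (-1) ^ pb.dim * (minpoly F pb.gen).coeff 0 :=
      Algebra.PowerBasis.norm_gen_eq_coeff_zero_minpoly pb
    have h2 : (minpoly F π).coeff 0 = -c0 := by
      rw [hmp, hP, Polynomial.coeff_sub, Polynomial.coeff_X_pow, Polynomial.coeff_C,
        if_neg hr.ne_zero.symm, if_pos rfl, zero_sub]
    have h3 : ((-1 : F)) ^ r = -1 := hodd.neg_one_pow
    calc Algebra.norm F π = (-1) ^ r * (-c0) := by rw [← h2]; exact h1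
    _ = c0 := by rw [h3]; ring
  have hrF : ((r : ℕ) : F) ≠ 0 := Nat.cast_ne_zero.2 hr.ne_zero
  have hnorm : Algebra.norm F (Polynomial.aeval π (Polynomial.derivative (minpoly F π)))
      = ((r : ℕ) : F) ^ r * c0 ^ (r - 1) := by
    rw [hder, map_mul, map_pow, hnormπ, Algebra.norm_algebraMap, hrank]
  -- value of the discriminant of the power basis
  have hnval : v (((r : ℕ) : F) ^ r * c0 ^ (r - 1)) = (r : ℤ) * e + (r : ℤ) - 1 := by
    rw [hv_mul _ _ (pow_ne_zero _ hrF) (pow_ne_zero _ hc00),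
      val_pow' v hv_mul _ hrF, val_pow' v hv_mul _ hc00, he, hvc0]
    have : ((r - 1 : ℕ) : ℤ) = (r : ℤ) - 1 := by
      have : 1 ≤ r := hr.one_lt.le
      push_cast [this]; ring
    rw [this]; ring
  have hsgn : v ((-1 : F) ^ (Module.finrank F M * (Module.finrank F M - 1) / 2)) = 0 := by
    rw [val_pow' v hv_mul _ (by norm_num : (-1 : F) ≠ 0)]
    have : v (-1 : F) = 0 := by
      have := val_neg' v hv_mul 1 one_ne_zero
      rw [this]; exact val_one' v hv_mul
    rw [this, mul_zero]
  have hdiscπ : v (Algebra.discr F ⇑πB) = (r : ℤ) * e + (r : ℤ) - 1 := by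
    have hpbb : pb.basis = πB := rfl
    rw [← hpbb, hdisc1, hnorm, hv_mul _ _ (pow_ne_zero _ (by norm_num : (-1 : F) ≠ 0))
      (mul_ne_zero (pow_ne_zero _ hrF) (pow_ne_zero _ hc00)), hsgn, hnval, zero_add]
  
  -- the valuation ring of F
  let O : Subring F :=
  { carrier := {x : F | x = 0 ∨ 0 ≤ v x}
    zero_mem' := Or.inl rfl
    one_mem' := Or.inr (le_of_eq (val_one' v hv_mul).symm)
    add_mem' := by
      intro a b' ha hb'
      rcases eq_or_ne a 0 with rfl | ha0
      · simpa using hb'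
      rcases eq_or_ne b' 0 with rfl | hb0
      · simpa using ha
      have hva : 0 ≤ v a := ha.resolve_left ha0
      have hvb : 0 ≤ v b' := hb'.resolve_left hb0
      rcases eq_or_ne (a + b') 0 with h | h
      · exact Or.inl h
      · exact Or.inr (le_trans (le_min hva hvb) (hv_add a b' ha0 hb0 h))
    mul_mem' := by
      intro a b' ha hb'
      rcases eq_or_ne a 0 with rfl | ha0
      · exact Or.inl (zero_mul _)
      rcases eq_or_ne b' 0 with rfl | hb0
      · exact Or.inl (mul_zero _)
      have hva : 0 ≤ v a := ha.resolve_left ha0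
      have hvb : 0 ≤ v b' := hb'.resolve_left hb0
      exact Or.inr (by rw [hv_mul a b' ha0 hb0]; omega)
    neg_mem' := by
      intro a ha
      rcases eq_or_ne a 0 with rfl | ha0
      · exact Or.inl (neg_zero)
      · exact Or.inr (by rw [val_neg' v hv_mul a ha0]; exact ha.resolve_left ha0) }
  have hOmem : ∀ x : F, (x = 0 ∨ 0 ≤ v x) ↔ x ∈ O := fun x => Iff.rfl
  have hOdet : ∀ (A : Matrix (Fin r) (Fin r) F), (∀ i j, A i j ∈ O) →
      (A.det = 0 ∨ 0 ≤ v A.det) := by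
    intro A hA
    let A' : Matrix (Fin r) (Fin r) O := fun i j => ⟨A i j, hA i j⟩
    have hAA : A = A'.map O.subtype := by
      ext i j; rfl
    have : A.det = O.subtype A'.det := by rw [hAA, RingHom.map_det, RingHom.mapMatrix_apply]
    rw [this]
    exact (hOmem _).2 (A'.det).property
  -- the change of basis matrices
  set P1 := πB.toMatrix b with hP1
  set P2 := bB.toMatrix ⇑πB with hP2
  have hP1int : ∀ i j, P1 i j ∈ O := by
    intro i j
    have hP1app : P1 i j = πB.repr (b j) i := Module.Basis.toMatrix_apply _ _ _ _
    rcases hb_int j with hbj | hbj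
    · rw [hP1app, hbj]
      exact (hOmem _).2 (Or.inl (by simp))
    · rw [hP1app]
      refine (hOmem _).2 ?_
      by_contra hmem
      have hmem' : πB.repr (b j) i ≠ 0 ∧ v (πB.repr (b j) i) < 0 := by
        constructor
        · intro h; exact hmem (Or.inl h)
        · by_contra h; exact hmem (Or.inr (by omega))
      obtain ⟨hcne, hclt⟩ := hmem'
      set cc : Fin r → F := fun i => πB.repr (b j) i with hcc
      have hbj_eq : b j = ∑ i, cc i • π ^ (i : ℕ) := by
        conv_lhs => rw [← Module.Basis.sum_repr πB (b j)]
        refine Finset.sum_congr rfl (fun i _ => by rw [hπB])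
      obtain ⟨hne0, i₀, hci₀, hwv, hminv⟩ := hkeyπ cc ⟨i, hcne⟩
      rw [← hbj_eq] at hwv
      simp only [hwπ, mul_one] at hwv hminv
      have hmini := hminv i hcne
      have hilt : (i : ℤ) < r := by exact_mod_cast i.isLt
      have hi₀nn : (0 : ℤ) ≤ (i₀ : ℤ) := by positivity
      have hrv : (r : ℤ) * v (cc i) ≤ (r : ℤ) * (-1) :=
        mul_le_mul_of_nonneg_left (show v (cc i) ≤ -1 by show v (πB.repr (b j) i) ≤ -1; omega) (by positivity)
      linarith
  have hP2int : ∀ i j, P2 i j ∈ O := by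
    intro i j
    have happ : P2 i j = bB.repr (πB j) i := Module.Basis.toMatrix_apply _ _ _ _
    have hwj : 0 ≤ w (πB j) := by
      have : πB j = π ^ (j : ℕ) := by rw [hπB]
      rw [this, val_pow' w hw_mul π hπ0, hwπ]
      positivity
    obtain ⟨c, hcint, hcx⟩ := (hb_span (πB j)).1 (Or.inr hwj)
    have hcx' : πB j = ∑ i, c i • bB i := by rw [hbB]; exact hcx
    have hrepr : bB.repr (πB j) = c := by rw [hcx']; exact bB.repr_sum_self c
    rw [happ, hrepr]
    exact (hOmem _).2 (hcint i)
  have hmulP : P1 * P2 = 1 := by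
    rw [hP1, hP2, ← hbB]
    exact Module.Basis.toMatrix_mul_toMatrix_flip πB bB
  have hdet : P1.det * P2.det = 1 := by rw [← Matrix.det_mul, hmulP, Matrix.det_one]
  have hd1n : P1.det ≠ 0 := by intro h; rw [h, zero_mul] at hdet; exact zero_ne_one hdet
  have hd2n : P2.det ≠ 0 := by intro h; rw [h, mul_zero] at hdet; exact zero_ne_one hdet
  have hv12 : v P1.det + v P2.det = 0 := by
    have hh := hv_mul _ _ hd1n hd2n
    rw [hdet, val_one' v hv_mul] at hh; omega
  have hvd1 : v P1.det = 0 := by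
    have h1 := (hOdet P1 hP1int).resolve_left hd1n
    have h2 := (hOdet P2 hP2int).resolve_left hd2n
    omega
  -- conclude
  have hdiscrne : Algebra.discr F ⇑πB ≠ 0 := Algebra.discr_not_zero_of_basis F πB
  have hbvec : b = Matrix.vecMul ⇑πB (P1.map (algebraMap F M)) := (Module.Basis.toMatrix_map_vecMul πB b).symm
  have hd : Algebra.discr F b = P1.det ^ 2 * Algebra.discr F ⇑πB := by
    conv_lhs => rw [hbvec]
    exact Algebra.discr_of_matrix_vecMul ⇑πB P1
  rw [hd, hv_mul _ _ (pow_ne_zero _ hd1n) hdiscrne, val_pow' v hv_mul _ hd1n, hvd1, hdiscπ]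
  ring
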